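/- arXiv:1509.07837 — 6 statements merged into one kernel-verified Lean document; each statement's English description precedes it below -/
import Mathlib

section
/- Let C ⊂ S^{n-1} be a spherical 2-design with N points, i.e. Σ_{x∈C} x = 0 and Σ_{x∈C} ⟨x,y⟩² = N/n for every unit vector y. Then for any two distinct points x, z ∈ C, ⟨x,z⟩ ≥ 1 − N/n. -/
open Finset
open scoped RealInnerProductSpace Classical

/-- Lemma 2.2(a): for a spherical 2-design of `N` points on `S^{n-1}`, any two distinct points
`x, z` satisfy `⟪x,z⟫ ≥ 1 − N/n`. -/
theorem two_design_inner_lower_bound (n N : ℕ) (hn : 1 ≤ n)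
    (C : Finset (EuclideanSpace ℝ (Fin n)))
    (hcard : C.card = N) (hunit : ∀ x ∈ C, ‖x‖ = 1)
    (hbal : ∑ x ∈ C, x = 0)
    (hdeg2 : ∀ y : EuclideanSpace ℝ (Fin n), ‖y‖ = 1 →
      ∑ x ∈ C, (⟪x, y⟫ : ℝ) ^ 2 = (N : ℝ) / n)
    (x z : EuclideanSpace ℝ (Fin n)) (hx : x ∈ C) (hz : z ∈ C) (hxz : x ≠ z) :
    1 - (N : ℝ) / n ≤ ⟪x, z⟫ := by
  set t : ℝ := ⟪x, z⟫ with ht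
  have hx1 : ‖x‖ = 1 := hunit x hx
  have hz1 : ‖z‖ = 1 := hunit z hz
  have hrpos : (0 : ℝ) < ‖x - z‖ := by
    rw [norm_pos_iff, sub_ne_zero]; exact hxz
  have hrne : ‖x - z‖ ≠ 0 := ne_of_gt hrpos
  set y : EuclideanSpace ℝ (Fin n) := ‖x - z‖⁻¹ • (x - z) with hy_def
  have hy : ‖y‖ = 1 := by
    rw [hy_def, norm_smul, norm_inv, norm_norm, inv_mul_cancel₀ hrne]
  have hsq : ‖x - z‖ ^ 2 = 2 - 2 * t := by
    rw [@norm_sub_sq_real, hx1, hz1, ← ht]; ring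
  have hxy : ⟪x, y⟫ = ‖x - z‖⁻¹ * (1 - t) := by
    rw [hy_def, real_inner_smul_right, inner_sub_right, ← ht,
      real_inner_self_eq_norm_sq, hx1]
    ring
  have hzy : ⟪z, y⟫ = ‖x - z‖⁻¹ * (t - 1) := by
    rw [hy_def, real_inner_smul_right, inner_sub_right,
      real_inner_self_eq_norm_sq, hz1, real_inner_comm, ← ht]
    ring
  have h2t : 2 - 2 * t ≠ 0 := by
    rw [← hsq]; positivity
  have key : ⟪x, y⟫ ^ 2 + ⟪z, y⟫ ^ 2 = 1 - t := by
    rw [hxy, hzy, mul_pow, mul_pow, inv_pow, hsq]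
    have h1t : (1 : ℝ) - t ≠ 0 := fun h => h2t (by linarith)
    field_simp
    ring
  have hsub : {x, z} ⊆ C := by
    intro w hw
    rcases Finset.mem_insert.mp hw with h | h
    · exact h ▸ hx
    · exact (Finset.mem_singleton.mp h) ▸ hz
  have hle : ⟪x, y⟫ ^ 2 + ⟪z, y⟫ ^ 2 ≤ ∑ w ∈ C, (⟪w, y⟫ : ℝ) ^ 2 := by
    have h := Finset.sum_le_sum_of_subset_of_nonneg (f := fun w => (⟪w, y⟫ : ℝ) ^ 2)
      hsub (fun w _ _ => sq_nonneg _)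
    rwa [Finset.sum_pair hxz] at h
  rw [hdeg2 y hy, key] at hle
  linarith
end

section
/- Let C ⊂ S^{n-1} be a spherical 2-design with N points, n+1 ≤ N ≤ 2n. Then for any two distinct points x, z ∈ C, ⟨x,z⟩ ≤ (N−2)/n − 1. -/
open Finset
open scoped RealInnerProductSpace Classical

/-- Lemma 2.1(a): for a spherical 2-design of `N` points on `S^{n-1}` with `n+1 ≤ N ≤ 2n`,
any two distinct points `x, z` satisfy `⟪x,z⟫ ≤ (N−2)/n − 1`. -/
theorem two_design_inner_upper_bound (n N : ℕ) (hn : 1 ≤ n)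
    (hN1 : n + 1 ≤ N) (hN2 : N ≤ 2 * n)
    (C : Finset (EuclideanSpace ℝ (Fin n)))
    (hcard : C.card = N) (hunit : ∀ x ∈ C, ‖x‖ = 1)
    (hbal : ∑ x ∈ C, x = 0)
    (hdeg2 : ∀ y : EuclideanSpace ℝ (Fin n), ‖y‖ = 1 →
      ∑ x ∈ C, (⟪x, y⟫ : ℝ) ^ 2 = (N : ℝ) / n)
    (x z : EuclideanSpace ℝ (Fin n)) (hx : x ∈ C) (hz : z ∈ C) (hxz : x ≠ z) :
    (⟪x, z⟫ : ℝ) ≤ ((N : ℝ) - 2) / n - 1 := by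
  set s : ℝ := ⟪x, z⟫ with hs
  have hxn : ‖x‖ = 1 := hunit x hx
  have hzn : ‖z‖ = 1 := hunit z hz
  have hn' : (0:ℝ) < n := by exact_mod_cast hn
  have hNn : 2 ≤ N := by omega
  have hN2R : (2:ℝ) ≤ N := by exact_mod_cast hNn
  have hsge : -1 ≤ s := by
    have h := abs_real_inner_le_norm x z
    rw [hxn, hzn] at h
    have := neg_abs_le (⟪x, z⟫ : ℝ)
    simp only [mul_one] at h
    linarith [this]
  rcases eq_or_lt_of_le hsge with heq | hlt
  · -- s = -1 case
    rw [← heq]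
    have : (0:ℝ) ≤ ((N:ℝ) - 2) / n := by
      apply div_nonneg <;> linarith
    linarith
  · -- main case: s > -1
    have hnormsq : ‖x + z‖ ^ 2 = 2 + 2 * s := by
      rw [norm_add_sq_real, hxn, hzn, ← hs]; ring_nf
    have hpos2 : (0:ℝ) < 2 + 2 * s := by linarith
    have hnpos : 0 < ‖x + z‖ := by
      by_contra h
      push_neg at h
      have : ‖x + z‖ = 0 := le_antisymm h (norm_nonneg _)
      rw [this] at hnormsq; nlinarith
    set c : ℝ := ‖x + z‖⁻¹ with hc
    have hcpos : 0 < c := inv_pos.mpr hnpos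
    set y : EuclideanSpace ℝ (Fin n) := c • (x + z) with hy
    have hyn : ‖y‖ = 1 := by
      rw [hy, norm_smul, hc, Real.norm_eq_abs, abs_inv, abs_of_pos hnpos]
      field_simp
    -- inner products with y
    have hinner : ∀ w : EuclideanSpace ℝ (Fin n),
        (⟪w, y⟫ : ℝ) = c * (⟪w, x⟫ + ⟪w, z⟫) := by
      intro w
      rw [hy, real_inner_smul_right, inner_add_right]
    have hxx : (⟪x, x⟫ : ℝ) = 1 := by
      rw [real_inner_self_eq_norm_sq, hxn]; norm_num
    have hzz : (⟪z, z⟫ : ℝ) = 1 := by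
      rw [real_inner_self_eq_norm_sq, hzn]; norm_num
    have hzx : (⟪z, x⟫ : ℝ) = s := by rw [real_inner_comm, ← hs]
    have hax : (⟪x, y⟫ : ℝ) = c * (1 + s) := by rw [hinner, hxx, ← hs]
    have haz : (⟪z, y⟫ : ℝ) = c * (1 + s) := by rw [hinner, hzx, hzz]; ring
    -- the set of remaining points
    set D : Finset (EuclideanSpace ℝ (Fin n)) := (C.erase x).erase z with hD
    have hzmem : z ∈ C.erase x := Finset.mem_erase.mpr ⟨fun h => hxz h.symm, hz⟩
    have hcardD : D.card = N - 2 := by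
      rw [hD, Finset.card_erase_of_mem hzmem, Finset.card_erase_of_mem hx, hcard]
      omega
    have hcardDR : (D.card : ℝ) = (N : ℝ) - 2 := by
      rw [hcardD]
      push_cast [Nat.cast_sub hNn]
      ring
    -- split sums
    have hsplit1 : ∀ f : EuclideanSpace ℝ (Fin n) → ℝ,
        ∑ w ∈ C, f w = f x + (f z + ∑ w ∈ D, f w) := by
      intro f
      rw [hD, ← Finset.add_sum_erase _ f hx, ← Finset.add_sum_erase _ f hzmem]
    -- first moment
    have hsum1 : ∑ w ∈ C, (⟪w, y⟫ : ℝ) = 0 := by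
      rw [← sum_inner, hbal, inner_zero_left]
    have hS1 : ∑ w ∈ D, (⟪w, y⟫ : ℝ) = -(2 * (c * (1 + s))) := by
      have := hsplit1 (fun w => (⟪w, y⟫ : ℝ))
      rw [hsum1, hax, haz] at this
      linarith
    -- second moment
    have hsum2 : ∑ w ∈ C, (⟪w, y⟫ : ℝ) ^ 2 = (N : ℝ) / n := hdeg2 y hyn
    have hS2 : ∑ w ∈ D, (⟪w, y⟫ : ℝ) ^ 2 = (N : ℝ) / n - 2 * (c * (1 + s)) ^ 2 := by
      have := hsplit1 (fun w => (⟪w, y⟫ : ℝ) ^ 2)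
      rw [hsum2, hax, haz] at this
      linarith
    -- Cauchy-Schwarz
    have hCS : (∑ w ∈ D, (⟪w, y⟫ : ℝ)) ^ 2 ≤
        (D.card : ℝ) * ∑ w ∈ D, (⟪w, y⟫ : ℝ) ^ 2 := by
      have h2 := Finset.sum_mul_sq_le_sq_mul_sq D (fun _ => (1:ℝ))
        (fun w => (⟪w, y⟫ : ℝ))
      simp only [one_mul, one_pow, Finset.sum_const, nsmul_eq_mul, mul_one] at h2
      exact h2
    -- a² = (1+s)/2
    have ha2 : (c * (1 + s)) ^ 2 = (1 + s) / 2 := by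
      have hc2 : c ^ 2 = (2 + 2 * s)⁻¹ := by
        rw [hc, inv_pow, hnormsq]
      rw [mul_pow, hc2]
      field_simp
    rw [hS1, hS2, hcardDR] at hCS
    have h4 : (-(2 * (c * (1 + s)))) ^ 2 = 2 * (1 + s) := by
      rw [neg_sq, mul_pow, ha2]; ring
    rw [h4] at hCS
    have hkey : 2 * (1 + s) ≤ ((N:ℝ) - 2) * ((N:ℝ)/n - (1 + s)) := by
      have : ((N:ℝ) - 2) * ((N:ℝ)/n - (1 + s)) =
          ((N:ℝ) - 2) * ((N:ℝ)/n - 2 * (c * (1 + s)) ^ 2) := by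
        rw [ha2]; ring
      rw [this]
      exact hCS
    have hNpos : (0:ℝ) < N := by linarith
    have hdiv : (N:ℝ) / n * n = N := div_mul_cancel₀ _ (ne_of_gt hn')
    have hkeyn := mul_le_mul_of_nonneg_right hkey (le_of_lt hn')
    have hexp : ((N:ℝ) - 2) * ((N:ℝ)/n - (1 + s)) * n =
        ((N:ℝ) - 2) * ((N:ℝ)/n * n - (1 + s) * n) := by ring
    rw [hexp, hdiv] at hkeyn
    have hgoal : (s + 1) * n ≤ (N:ℝ) - 2 := by
      have A := hkeyn
      have B := hNpos
      clear_value s c y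
      clear * - A B
      nlinarith [A, B]
    have : s + 1 ≤ ((N:ℝ) - 2) / n := (le_div_iff₀ hn').mpr hgoal
    linarith
end

section
/- Let n ≥ 2, N ∈ [n+1, 2n], and h be a convex nonnegative function on [-1,1] with h convex and h'' ≥ 0 implying the chord lies above the graph. If C is a spherical 2-design on S^{n-1} with N points whose pairwise inner products all lie in [ℓ, u] where ℓ = 1 − N/n and u = (N−2)/n − 1, and ℓ < u, then E(C;h) ≤ N[(N−1)(u·h(ℓ) − ℓ·h(u)) + h(ℓ) − h(u)]/(u − ℓ). -/
open Finset
open scoped RealInnerProductSpace Classical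

/-- Theorem 5.1: upper bound for the `h`-energy of a spherical 2-design of `N` points on
`S^{n-1}` (`n+1 ≤ N ≤ 2n`, `h` convex and nonnegative), whose pairwise inner products lie in
`[ℓ, u]` with `ℓ = 1 − N/n`, `u = (N−2)/n − 1` and `ℓ < u`. -/
theorem two_design_energy_upper_bound (n N : ℕ) (hn : 2 ≤ n)
    (hN1 : n + 1 ≤ N) (hN2 : N ≤ 2 * n)
    (h : ℝ → ℝ) (hconv : ConvexOn ℝ (Set.Icc (-1 : ℝ) 1) h)
    (hnonneg : ∀ t ∈ Set.Icc (-1 : ℝ) 1, 0 ≤ h t)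
    (ℓ u : ℝ) (hℓ : ℓ = 1 - (N : ℝ) / n) (hu : u = ((N : ℝ) - 2) / n - 1) (hℓu : ℓ < u)
    (C : Finset (EuclideanSpace ℝ (Fin n)))
    (hcard : C.card = N) (hunit : ∀ x ∈ C, ‖x‖ = 1)
    (hbal : ∑ x ∈ C, x = 0)
    (hdeg2 : ∀ y : EuclideanSpace ℝ (Fin n), ‖y‖ = 1 →
      ∑ x ∈ C, (⟪x, y⟫ : ℝ) ^ 2 = (N : ℝ) / n)
    (hrange : ∀ x ∈ C, ∀ y ∈ C, x ≠ y → (⟪x, y⟫ : ℝ) ∈ Set.Icc ℓ u) :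
    ∑ x ∈ C, ∑ y ∈ C.erase x, h ⟪x, y⟫ ≤
      (N : ℝ) * (((N : ℝ) - 1) * (u * h ℓ - ℓ * h u) + h ℓ - h u) / (u - ℓ) := by
  have hnpos : (0 : ℝ) < n := by positivity
  have hupos : (0 : ℝ) < u - ℓ := sub_pos.2 hℓu
  have hNn : (N : ℝ) ≤ 2 * n := by exact_mod_cast hN2
  have hℓmem : ℓ ∈ Set.Icc (-1 : ℝ) 1 := by
    constructor
    · rw [hℓ]
      have : (N : ℝ) / n ≤ 2 := by
        rw [div_le_iff₀ hnpos]; linarith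
      linarith
    · rw [hℓ]
      have : (0 : ℝ) ≤ (N : ℝ) / n := by positivity
      linarith
  have humem : u ∈ Set.Icc (-1 : ℝ) 1 := by
    constructor
    · linarith [hℓmem.1]
    · rw [hu]
      have : ((N : ℝ) - 2) / n ≤ 2 := by
        rw [div_le_iff₀ hnpos]; linarith
      linarith
  -- chord bound
  have chord : ∀ t ∈ Set.Icc ℓ u,
      h t ≤ (u * h ℓ - ℓ * h u) / (u - ℓ) + t * ((h u - h ℓ) / (u - ℓ)) := by
    intro t ht
    set a : ℝ := (u - t) / (u - ℓ) with ha_def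
    set b : ℝ := (t - ℓ) / (u - ℓ) with hb_def
    have ha : 0 ≤ a := div_nonneg (by linarith [ht.2]) hupos.le
    have hb : 0 ≤ b := div_nonneg (by linarith [ht.1]) hupos.le
    have hab : a + b = 1 := by rw [ha_def, hb_def, ← add_div, div_eq_one_iff_eq hupos.ne']; ring
    have hcomb := hconv.2 hℓmem humem ha hb hab
    have heq : a • ℓ + b • u = t := by
      rw [ha_def, hb_def, smul_eq_mul, smul_eq_mul, div_mul_eq_mul_div, div_mul_eq_mul_div, ← add_div, div_eq_iff hupos.ne']; ring
    rw [heq] at hcomb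
    have : a * h ℓ + b * h u =
        (u * h ℓ - ℓ * h u) / (u - ℓ) + t * ((h u - h ℓ) / (u - ℓ)) := by
      rw [ha_def, hb_def, div_mul_eq_mul_div, div_mul_eq_mul_div, ← add_div, mul_div_assoc', ← add_div, div_left_inj' hupos.ne']; ring
    simpa [smul_eq_mul, this] using hcomb
  -- row sum of inner products
  have hrow : ∀ x ∈ C, ∑ y ∈ C.erase x, (⟪x, y⟫ : ℝ) = -1 := by
    intro x hx
    have hself : (⟪x, x⟫ : ℝ) = 1 := by
      rw [real_inner_self_eq_norm_sq, hunit x hx]; norm_num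
    have hsum : ∑ y ∈ C, (⟪x, y⟫ : ℝ) = 0 := by
      rw [← inner_sum, hbal, inner_zero_right]
    have h2 := Finset.add_sum_erase C (fun y => (⟪x, y⟫ : ℝ)) hx
    simp only [hsum, hself] at h2
    linarith
  have hcardN : (1 : ℕ) ≤ N := by omega
  have hcarderase : ∀ x ∈ C, ((C.erase x).card : ℝ) = (N : ℝ) - 1 := by
    intro x hx
    rw [Finset.card_erase_of_mem hx, hcard]
    have : (1 : ℕ) ≤ N := hcardN
    push_cast [Nat.cast_sub this]
    ring
  -- bound each row
  have key : ∀ x ∈ C, ∑ y ∈ C.erase x, h ⟪x, y⟫ ≤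
      (((N : ℝ) - 1) * (u * h ℓ - ℓ * h u) + h ℓ - h u) / (u - ℓ) := by
    intro x hx
    have step : ∑ y ∈ C.erase x, h ⟪x, y⟫ ≤
        ∑ y ∈ C.erase x,
          ((u * h ℓ - ℓ * h u) / (u - ℓ) + (⟪x, y⟫ : ℝ) * ((h u - h ℓ) / (u - ℓ))) := by
      apply Finset.sum_le_sum
      intro y hy
      have hyC := Finset.mem_of_mem_erase hy
      have hxy : x ≠ y := (Finset.ne_of_mem_erase hy).symm
      exact chord _ (hrange x hx y hyC hxy)
    refine step.trans ?_
    rw [Finset.sum_add_distrib, Finset.sum_const, ← Finset.sum_mul, hrow x hx]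
    rw [nsmul_eq_mul, hcarderase x hx]
    field_simp
    ring_nf
    rfl
  calc ∑ x ∈ C, ∑ y ∈ C.erase x, h ⟪x, y⟫
      ≤ ∑ _x ∈ C, (((N : ℝ) - 1) * (u * h ℓ - ℓ * h u) + h ℓ - h u) / (u - ℓ) :=
        Finset.sum_le_sum key
    _ = (N : ℝ) * (((N : ℝ) - 1) * (u * h ℓ - ℓ * h u) + h ℓ - h u) / (u - ℓ) := by
        rw [Finset.sum_const, hcard, nsmul_eq_mul]; ring
end

section
/- Let C be a spherical 2-design with N points on S^{n-1}, where N ∈ [n+1, 2n], and let h be a function on [-1,1] that is bounded below on [ℓ,1) by the quadratic polynomial f interpolating h at ℓ = 1 − N/n with f(ℓ) = h(ℓ), f(0) = h(0), f'(0) = h'(0) (valid when h has nonnegative third derivative). Then E(C;h) ≥ N[h(0)·N(N−n−1) + n·h(1−N/n)]/(N−n). -/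
open Finset
open scoped RealInnerProductSpace Classical

/-- Theorem 4.2: lower bound for the `h`-energy of a spherical 2-design of `N` points on
`S^{n-1}` with `n+1 ≤ N ≤ 2n`, where `h` is bounded below on `[ℓ,1)` (with `ℓ = 1 − N/n`) by
the quadratic polynomial `f` interpolating `h` at `ℓ` and touching it at `0`:
`f(ℓ) = h(ℓ)`, `f(0) = h(0)`, `f'(0) = h'(0)`. -/
theorem two_design_energy_lower_bound (n N : ℕ) (hn : 2 ≤ n)
    (hN1 : n + 1 ≤ N) (hN2 : N ≤ 2 * n)
    (h f : ℝ → ℝ) (c0 c1 c2 : ℝ)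
    (hfdef : f = fun t => c2 * t ^ 2 + c1 * t + c0)
    (ℓ : ℝ) (hℓ : ℓ = 1 - (N : ℝ) / n)
    (hfℓ : f ℓ = h ℓ) (hf0 : f 0 = h 0) (hf'0 : c1 = deriv h 0)
    (hdom : ∀ t ∈ Set.Ico ℓ (1 : ℝ), f t ≤ h t)
    (C : Finset (EuclideanSpace ℝ (Fin n)))
    (hcard : C.card = N) (hunit : ∀ x ∈ C, ‖x‖ = 1)
    (hbal : ∑ x ∈ C, x = 0)
    (hdeg2 : ∀ y : EuclideanSpace ℝ (Fin n), ‖y‖ = 1 →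
      ∑ x ∈ C, (⟪x, y⟫ : ℝ) ^ 2 = (N : ℝ) / n)
    (hrange : ∀ x ∈ C, ∀ y ∈ C, x ≠ y → (⟪x, y⟫ : ℝ) ∈ Set.Ico ℓ (1 : ℝ)) :
    (N : ℝ) * (h 0 * N * ((N : ℝ) - n - 1) + n * h (1 - (N : ℝ) / n)) / ((N : ℝ) - n) ≤
      ∑ x ∈ C, ∑ y ∈ C.erase x, h ⟪x, y⟫ := by
  have hn0 : (n : ℝ) ≠ 0 := by positivity
  have hNn' : (n : ℝ) + 1 ≤ N := by exact_mod_cast hN1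
  have hNn : (N : ℝ) - n ≠ 0 := by linarith
  have hc0 : c0 = h 0 := by simpa [hfdef] using hf0
  have hdiag : ∀ x ∈ C, (⟪x, x⟫ : ℝ) = 1 := by
    intro x hx
    rw [real_inner_self_eq_norm_sq, hunit x hx]; norm_num
  -- first moment
  have hrow1 : ∀ x ∈ C, ∑ y ∈ C.erase x, (⟪x, y⟫ : ℝ) = -1 := by
    intro x hx
    have hall : ∑ y ∈ C, (⟪x, y⟫ : ℝ) = 0 := by
      rw [← inner_sum, hbal, inner_zero_right]
    have h2 := Finset.add_sum_erase C (fun y => (⟪x, y⟫ : ℝ)) hx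
    simp only [hall, hdiag x hx] at h2
    linarith
  -- second moment
  have hrow2 : ∀ x ∈ C, ∑ y ∈ C.erase x, (⟪x, y⟫ : ℝ) ^ 2 = (N : ℝ) / n - 1 := by
    intro x hx
    have hall : ∑ y ∈ C, (⟪x, y⟫ : ℝ) ^ 2 = (N : ℝ) / n := by
      have := hdeg2 x (hunit x hx)
      calc ∑ y ∈ C, (⟪x, y⟫ : ℝ) ^ 2 = ∑ y ∈ C, (⟪y, x⟫ : ℝ) ^ 2 := by
            refine Finset.sum_congr rfl fun y _ => by rw [real_inner_comm]
        _ = (N : ℝ) / n := this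
    have h2 := Finset.add_sum_erase C (fun y => (⟪x, y⟫ : ℝ) ^ 2) hx
    simp only [hall, hdiag x hx, one_pow] at h2
    linarith
  have hcardE : ∀ x ∈ C, ((C.erase x).card : ℝ) = (N : ℝ) - 1 := by
    intro x hx
    rw [Finset.card_erase_of_mem hx, hcard]
    have : 1 ≤ N := by omega
    push_cast [Nat.cast_sub this]
    ring
  -- sum of f over pairs
  have hfsum : ∑ x ∈ C, ∑ y ∈ C.erase x, f ⟪x, y⟫
      = c2 * ((N : ℝ) * ((N : ℝ) / n - 1)) + c1 * (-(N : ℝ)) + c0 * ((N : ℝ) * ((N : ℝ) - 1)) := by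
    have : ∀ x ∈ C, ∑ y ∈ C.erase x, f ⟪x, y⟫
        = c2 * ((N : ℝ) / n - 1) + c1 * (-1) + c0 * ((N : ℝ) - 1) := by
      intro x hx
      simp only [hfdef, Finset.sum_add_distrib, ← Finset.mul_sum, hrow1 x hx, hrow2 x hx,
        Finset.sum_const, nsmul_eq_mul]
      rw [hcardE x hx]; ring
    rw [Finset.sum_congr rfl this, Finset.sum_const, nsmul_eq_mul, hcard]
    ring
  -- pointwise domination
  have hmono : ∑ x ∈ C, ∑ y ∈ C.erase x, f ⟪x, y⟫ ≤ ∑ x ∈ C, ∑ y ∈ C.erase x, h ⟪x, y⟫ := by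
    refine Finset.sum_le_sum fun x hx => Finset.sum_le_sum fun y hy => ?_
    exact hdom _ (hrange x hx y (Finset.mem_of_mem_erase hy)
      (Finset.ne_of_mem_erase hy).symm)
  -- the target equals the f-sum
  have hhl : h (1 - (N : ℝ) / n) = c2 * ℓ ^ 2 + c1 * ℓ + c0 := by
    rw [← hℓ, ← hfℓ, hfdef]
  have heq : (N : ℝ) * (h 0 * N * ((N : ℝ) - n - 1) + n * h (1 - (N : ℝ) / n)) / ((N : ℝ) - n)
      = c2 * ((N : ℝ) * ((N : ℝ) / n - 1)) + c1 * (-(N : ℝ)) + c0 * ((N : ℝ) * ((N : ℝ) - 1)) := by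
    rw [hhl, hℓ, ← hc0]
    field_simp
    ring
  rw [heq, ← hfsum]
  exact hmono
end

section
/- If N = n+1 or N = n+2, then the lower bound N[h(0)·N(N−n−1) + n·h(1−N/n)]/(N−n) and the upper bound N[(N−1)(u·h(ℓ) − ℓ·h(u)) + h(ℓ) − h(u)]/(u−ℓ) with ℓ = 1−N/n, u = (N−2)/n − 1 coincide for every function h. -/
/-- Example 5.3: for `N = n+1` and `N = n+2` the lower bound of Theorem 4.2 coincides with the
upper bound of Theorem 5.1 (with `ℓ = 1 − N/n`, `u = (N−2)/n − 1`; for `N = n+1` the bounds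
degenerate to the common value `N(N−1)h(−1/n)`). -/
theorem two_design_bounds_coincide (n N : ℕ) (hn : 1 ≤ n) (h : ℝ → ℝ)
    (hN : N = n + 1 ∨ N = n + 2)
    (ℓ u : ℝ) (hℓ : ℓ = 1 - (N : ℝ) / n) (hu : u = ((N : ℝ) - 2) / n - 1) :
    (N : ℝ) * (h 0 * N * ((N : ℝ) - n - 1) + n * h ℓ) / ((N : ℝ) - n) =
      if N = n + 1 then (N : ℝ) * ((N : ℝ) - 1) * h (-1 / n)
      else (N : ℝ) * (((N : ℝ) - 1) * (u * h ℓ - ℓ * h u) + h ℓ - h u) / (u - ℓ) := by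
  have hn0 : (n : ℝ) ≠ 0 := Nat.cast_ne_zero.mpr (by omega)
  rcases hN with rfl | rfl
  · have hℓ' : ℓ = -1 / n := by rw [hℓ]; push_cast; field_simp; ring
    rw [if_pos rfl, ← hℓ']
    push_cast
    field_simp
    ring
  · have hne : n + 2 ≠ n + 1 := by omega
    rw [if_neg hne]
    have hℓ' : ℓ = -2 / n := by rw [hℓ]; push_cast; field_simp; ring
    have hu' : u = 0 := by rw [hu]; push_cast; field_simp; ring
    subst hℓ' hu'
    push_cast
    field_simp
    ring_nf
end

section
/- For all sufficiently large s, the Riesz s-energy of the Mimura design {k,k} is strictly larger than that of the configuration {2,2k−2}: E_s({k,k}) > E_s({2,2k−2}) for s large, where E_s({k,k}) = (k²/2^{s/2})(1 + (k−1)/k·((k−1)/k)^{s/2}) and E_s({2,2k−2}) = (2(2k−2)/2^{s/2})(1 + 1/(2(2k−2)2^{s/2}) + ((2k−3)/4)((2k−3)/(2k−2))^{s/2}), assuming k ≥ 3. -/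
open Filter Real Topology

lemma aux (K X A C : ℝ) (hK : 3 ≤ K) (hX : 0 < X) (hA : 0 ≤ A) (hC : 0 ≤ C)
    (h1 : X⁻¹ + (K - 1) * (2 * K - 3) * A < 1) :
    (2 * (2 * K - 2)) / X * (1 + 1 / (2 * (2 * K - 2) * X) + ((2 * K - 3) / 4) * A) <
      K ^ 2 / X * (1 + ((K - 1) / K) * C) := by
  have hK0 : (0:ℝ) < K := by linarith
  have h1' : 1 + (K - 1) * (2 * K - 3) * A * X < X := by
    have := mul_lt_mul_of_pos_right h1 hX
    rw [add_mul, inv_mul_cancel₀ hX.ne', one_mul] at this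
    linarith
  have h4 : (2 * (2 * K - 2)) ≠ 0 := by nlinarith
  have hCK : 0 ≤ (K - 1) / K * C := mul_nonneg (div_nonneg (by linarith) hK0.le) hC
  rw [div_mul_eq_mul_div (K ^ 2) X, div_mul_eq_mul_div (2 * (2 * K - 2)) X,
    div_lt_div_iff₀ hX hX]
  have heq : 2 * (2 * K - 2) * (1 + 1 / (2 * (2 * K - 2) * X) + (2 * K - 3) / 4 * A) * X
      = (4 * K - 4) * X + 1 + (K - 1) * (2 * K - 3) * A * X := by
    field_simp [(by linarith : (0:ℝ) < K - 1).ne']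
    ring
  rw [heq]
  nlinarith [mul_nonneg hCK hX.le, mul_nonneg (mul_nonneg (by linarith : (0:ℝ) ≤ K - 1)
    (by linarith : (0:ℝ) ≤ K - 3)) hX.le]

/-- Example 5.4: for `k ≥ 3` and all sufficiently large `s`, the Riesz `s`-energy of the Mimura
design `{k,k}` is strictly larger than that of the competing configuration `{2, 2k−2}`. -/
theorem mimura_not_universally_optimal (k : ℕ) (hk : 3 ≤ k) :
    ∃ s₀ : ℝ, ∀ s : ℝ, s₀ ≤ s →
      (2 * (2 * (k : ℝ) - 2)) / (2 : ℝ) ^ (s / 2) *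
          (1 + 1 / (2 * (2 * (k : ℝ) - 2) * (2 : ℝ) ^ (s / 2)) +
            ((2 * (k : ℝ) - 3) / 4) * ((2 * (k : ℝ) - 3) / (2 * (k : ℝ) - 2)) ^ (s / 2)) <
        (k : ℝ) ^ 2 / (2 : ℝ) ^ (s / 2) *
          (1 + (((k : ℝ) - 1) / k) * (((k : ℝ) - 1) / k) ^ (s / 2)) := by
  have hK : (3:ℝ) ≤ (k:ℝ) := by exact_mod_cast hk
  set K := (k:ℝ)
  set a := (2 * K - 3) / (2 * K - 2) with ha
  have ha0 : (0:ℝ) < a := by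
    apply div_pos <;> linarith
  have ha1 : a < 1 := by
    rw [ha, div_lt_one (by linarith)]; linarith
  have hdiv : Tendsto (fun s : ℝ => s / 2) atTop atTop :=
    tendsto_id.atTop_div_const two_pos
  have t1 : Tendsto (fun s : ℝ => (((2:ℝ) ^ (s / 2))⁻¹)) atTop (𝓝 0) := by
    have := (tendsto_rpow_atTop_of_base_lt_one ((2:ℝ)⁻¹) (by norm_num) (by norm_num)).comp hdiv
    simpa [Function.comp_def, Real.inv_rpow (le_of_lt two_pos)] using this
  have t2 : Tendsto (fun s : ℝ => a ^ (s / 2)) atTop (𝓝 0) :=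
    (tendsto_rpow_atTop_of_base_lt_one a (by linarith) ha1).comp hdiv
  have total : Tendsto
      (fun s : ℝ => ((2:ℝ) ^ (s / 2))⁻¹ + (K - 1) * (2 * K - 3) * a ^ (s / 2))
      atTop (𝓝 0) := by
    simpa using t1.add (t2.const_mul ((K - 1) * (2 * K - 3)))
  have hev := total.eventually_lt_const (by norm_num : (0:ℝ) < 1)
  rw [Filter.eventually_atTop] at hev
  obtain ⟨s₀, hs₀⟩ := hev
  refine ⟨s₀, fun s hs => ?_⟩
  exact aux K ((2:ℝ) ^ (s / 2)) (a ^ (s / 2)) (((K - 1) / K) ^ (s / 2)) hK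
    (Real.rpow_pos_of_pos two_pos _) (Real.rpow_nonneg ha0.le _)
    (Real.rpow_nonneg (div_nonneg (by linarith) (by linarith)) _) (hs₀ s hs)
end
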